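/- Let α, β > 0 and define the Laguerre–Laguerre connection coefficients 𝒟_{m,n} = ∫_0^∞ L̃_m^{(α)}(x) L̃_n^{(β)}(x) x^β e^{−x} dx, where L̃_n^{(γ)}(x) = (−1)^n √(n!/Γ(n+γ+1)) L_n^{(γ)}(x) are the orthonormal generalized Laguerre polynomials. Then for all integers 0 ≤ n ≤ m: 𝒟_{m,n} = (−1)^{m−n} ((α − β)_{m−n}/(m−n)!) · √( m! Γ(n+1+β) / (n! Γ(m+1+α)) ), where (z)_k = z(z+1)⋯(z+k−1) is the Pochhammer symbol. -/

import Mathlib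

open MeasureTheory

/-- The generalized Laguerre polynomial
`L_n^{(α)}(x) = ∑_{k=0}^{n} (−1)^k (Γ(n+α+1)/(Γ(k+α+1)(n−k)! k!)) x^k`. -/
noncomputable def laguerreL (α : ℝ) (n : ℕ) (x : ℝ) : ℝ :=
  ∑ k ∈ Finset.range (n + 1),
    (-1 : ℝ) ^ k * (Real.Gamma ((n : ℝ) + α + 1) /
      (Real.Gamma ((k : ℝ) + α + 1) * (Nat.factorial (n - k)) * (Nat.factorial k))) * x ^ k

/-- The orthonormal generalized Laguerre polynomials
`L̃_n^{(γ)}(x) = (−1)^n √(n!/Γ(n+γ+1)) L_n^{(γ)}(x)`. -/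
noncomputable def laguerreTilde (γ : ℝ) (n : ℕ) (x : ℝ) : ℝ :=
  (-1 : ℝ) ^ n * Real.sqrt ((Nat.factorial n : ℝ) / Real.Gamma ((n : ℝ) + γ + 1)) *
    laguerreL γ n x

/-- The Laguerre–Laguerre connection coefficients
`𝒟_{m,n} = ∫_0^∞ L̃_m^{(α)}(x) L̃_n^{(β)}(x) x^β e^{−x} dx`. -/
noncomputable def DLag (α β : ℝ) (m n : ℕ) : ℝ :=
  ∫ x in Set.Ioi (0 : ℝ), laguerreTilde α m x * laguerreTilde β n x * x ^ β * Real.exp (-x)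

lemma pochNeg (n k : ℕ) :
    (ascPochhammer ℝ n).eval (-(k:ℝ)) = (-1:ℝ)^n * (k.descFactorial n : ℝ) := by
  induction n with
  | zero => simp
  | succ n ih =>
    rw [ascPochhammer_succ_right, Polynomial.eval_mul, ih, Nat.descFactorial_succ]
    simp only [Polynomial.eval_add, Polynomial.eval_X, Polynomial.eval_natCast]
    rcases le_or_gt k n with h | h
    · rcases Nat.eq_or_lt_of_le h with rfl | h'
      · simp [Nat.sub_self]
      · rw [Nat.descFactorial_eq_zero_iff_lt.2 h']
        push_cast; ring
    · have : ((k - n : ℕ) : ℝ) = (k:ℝ) - n := by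
        rw [Nat.cast_sub h.le]
      push_cast [this]; ring

lemma key_sum (M : ℕ) : ∀ a b : ℝ, 0 < a → 0 < b →
    ∑ s ∈ Finset.range (M+1), (-1:ℝ)^s * (M.choose s : ℝ) * (Real.Gamma (a + s) / Real.Gamma (b + s))
      = Real.Gamma a * (ascPochhammer ℝ M).eval (b - a) / Real.Gamma (b + M) := by
  induction M with
  | zero => intro a b ha hb; simp
  | succ M ih =>
    intro a b ha hb
    have hbM : (0:ℝ) < b + M := by positivity
    have hGbM := (Real.Gamma_pos_of_pos hbM).ne'
    rw [Finset.sum_range_succ']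
    have expand : ∀ s ∈ Finset.range (M+1),
        (-1:ℝ)^(s+1) * ((M+1).choose (s+1) : ℝ) * (Real.Gamma (a + ↑(s+1)) / Real.Gamma (b + ↑(s+1)))
          = -((-1:ℝ)^s * (M.choose s : ℝ) * (Real.Gamma ((a+1) + s) / Real.Gamma ((b+1) + s)))
            + (-1:ℝ)^(s+1) * (M.choose (s+1) : ℝ) * (Real.Gamma (a + ↑(s+1)) / Real.Gamma (b + ↑(s+1))) := by
      intro s _
      rw [Nat.choose_succ_succ]
      rw [show a + ((s:ℕ)+1 : ℕ) = (a+1) + s by push_cast; ring,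
          show b + ((s:ℕ)+1 : ℕ) = (b+1) + s by push_cast; ring]
      push_cast
      ring
    rw [Finset.sum_congr rfl expand, Finset.sum_add_distrib, Finset.sum_neg_distrib]
    have h2 : (∑ s ∈ Finset.range (M+1), (-1:ℝ)^(s+1) * (M.choose (s+1) : ℝ) * (Real.Gamma (a + ↑(s+1)) / Real.Gamma (b + ↑(s+1))))
        + (-1:ℝ)^0 * (M.choose 0 : ℝ) * (Real.Gamma (a + (0:ℕ)) / Real.Gamma (b + (0:ℕ)))
        = ∑ s ∈ Finset.range (M+1), (-1:ℝ)^s * (M.choose s : ℝ) * (Real.Gamma (a + s) / Real.Gamma (b + s)) := by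
      rw [← Finset.sum_range_succ' (fun s => (-1:ℝ)^s * (M.choose s : ℝ) * (Real.Gamma (a + s) / Real.Gamma (b + s))) (M+1)]
      rw [Finset.sum_range_succ]
      simp [Nat.choose_succ_self]
    rw [show ((-1:ℝ)^0 * (((M+1).choose 0 : ℕ) : ℝ) * (Real.Gamma (a + ((0:ℕ):ℝ)) / Real.Gamma (b + ((0:ℕ):ℝ)))) = (-1:ℝ)^0 * ((M.choose 0 : ℕ) : ℝ) * (Real.Gamma (a + ((0:ℕ):ℝ)) / Real.Gamma (b + ((0:ℕ):ℝ))) by simp]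
    rw [add_assoc, h2, ih a b ha hb, ih (a+1) (b+1) (by positivity) (by positivity)]
    rw [Real.Gamma_add_one ha.ne']
    rw [show b + ((M:ℕ)+1:ℕ) = (b + M) + 1 by push_cast; ring,
        show (b+1) + (M:ℝ) = (b + M) + 1 by ring,
        Real.Gamma_add_one hbM.ne']
    rw [ascPochhammer_succ_right, Polynomial.eval_mul]
    simp only [Polynomial.eval_add, Polynomial.eval_X, Polynomial.eval_natCast]
    field_simp
    ring

lemma my_inner_sum (β : ℝ) (hβ : 0 < β) (n k : ℕ) :
    ∑ j ∈ Finset.range (n+1),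
      ((-1:ℝ)^j * (Real.Gamma ((n:ℝ)+β+1) / (Real.Gamma ((j:ℝ)+β+1) * (Nat.factorial (n-j) : ℝ) * (Nat.factorial j : ℝ))))
        * Real.Gamma (β + (k:ℝ) + (j:ℝ) + 1)
    = (-1:ℝ)^n * (k.descFactorial n : ℝ) * Real.Gamma (β + (k:ℝ) + 1) / (Nat.factorial n : ℝ) := by
  have hGn := (Real.Gamma_pos_of_pos (show (0:ℝ) < (n:ℝ)+β+1 by positivity)).ne'
  have hstep : ∀ j ∈ Finset.range (n+1),
      ((-1:ℝ)^j * (Real.Gamma ((n:ℝ)+β+1) / (Real.Gamma ((j:ℝ)+β+1) * (Nat.factorial (n-j) : ℝ) * (Nat.factorial j : ℝ))))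
        * Real.Gamma (β + (k:ℝ) + (j:ℝ) + 1)
      = (Real.Gamma ((n:ℝ)+β+1) / (Nat.factorial n : ℝ)) *
          ((-1:ℝ)^j * (n.choose j : ℝ) * (Real.Gamma ((β + (k:ℝ) + 1) + (j:ℝ)) / Real.Gamma ((β + 1) + (j:ℝ)))) := by
    intro j hj
    have hj' : j ≤ n := Nat.lt_succ_iff.mp (Finset.mem_range.mp hj)
    have hc : ((n.choose j : ℕ) : ℝ) * (Nat.factorial j : ℝ) * (Nat.factorial (n-j) : ℝ) = (Nat.factorial n : ℝ) := by
      exact_mod_cast Nat.choose_mul_factorial_mul_factorial hj'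
    have hG1 := (Real.Gamma_pos_of_pos (show (0:ℝ) < (j:ℝ)+β+1 by positivity)).ne'
    have hf1 : (Nat.factorial (n-j) : ℝ) ≠ 0 := Nat.cast_ne_zero.mpr (Nat.factorial_ne_zero _)
    have hf2 : (Nat.factorial j : ℝ) ≠ 0 := Nat.cast_ne_zero.mpr (Nat.factorial_ne_zero _)
    have hf3 : (Nat.factorial n : ℝ) ≠ 0 := Nat.cast_ne_zero.mpr (Nat.factorial_ne_zero _)
    rw [show (β + (k:ℝ) + 1) + (j:ℝ) = β + (k:ℝ) + (j:ℝ) + 1 by ring,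
        show (β + 1) + (j:ℝ) = (j:ℝ) + β + 1 by ring]
    field_simp
    linear_combination (-1:ℝ) * hc
  rw [Finset.sum_congr rfl hstep, ← Finset.mul_sum,
      key_sum n (β + (k:ℝ) + 1) (β + 1) (by positivity) (by positivity),
      show (β + 1) - (β + (k:ℝ) + 1) = -(k:ℝ) by ring, pochNeg,
      show (β + 1) + (n:ℝ) = (n:ℝ) + β + 1 by ring]
  field_simp

set_option maxHeartbeats 1000000 in
lemma my_outer_sum (α β : ℝ) (hα : 0 < α) (hβ : 0 < β) (m n : ℕ) (hnm : n ≤ m) :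
    ∑ k ∈ Finset.range (m+1),
      ((-1:ℝ)^k * (Real.Gamma ((m:ℝ)+α+1) / (Real.Gamma ((k:ℝ)+α+1) * (Nat.factorial (m-k) : ℝ) * (Nat.factorial k : ℝ))))
        * ((-1:ℝ)^n * (k.descFactorial n : ℝ) * Real.Gamma (β + (k:ℝ) + 1) / (Nat.factorial n : ℝ))
    = Real.Gamma ((n:ℝ) + β + 1) * (ascPochhammer ℝ (m-n)).eval (α - β)
        / ((Nat.factorial n : ℝ) * (Nat.factorial (m-n) : ℝ)) := by
  have hGm := (Real.Gamma_pos_of_pos (show (0:ℝ) < (m:ℝ)+α+1 by positivity)).ne'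
  rw [show m + 1 = n + ((m-n)+1) by omega, Finset.sum_range_add]
  have hz : ∀ k ∈ Finset.range n, ((-1:ℝ)^k * (Real.Gamma ((m:ℝ)+α+1) / (Real.Gamma ((k:ℝ)+α+1) * (Nat.factorial (m-k) : ℝ) * (Nat.factorial k : ℝ))))
        * ((-1:ℝ)^n * (k.descFactorial n : ℝ) * Real.Gamma (β + (k:ℝ) + 1) / (Nat.factorial n : ℝ)) = 0 := by
    intro k hk
    rw [Nat.descFactorial_eq_zero_iff_lt.mpr (Finset.mem_range.mp hk)]
    simp
  rw [Finset.sum_eq_zero hz, zero_add]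
  have hstep : ∀ s ∈ Finset.range ((m-n)+1),
      ((-1:ℝ)^(n+s) * (Real.Gamma ((m:ℝ)+α+1) / (Real.Gamma (((n+s:ℕ):ℝ)+α+1) * (Nat.factorial (m-(n+s)) : ℝ) * (Nat.factorial (n+s) : ℝ))))
        * ((-1:ℝ)^n * ((n+s).descFactorial n : ℝ) * Real.Gamma (β + ((n+s:ℕ):ℝ) + 1) / (Nat.factorial n : ℝ))
      = (Real.Gamma ((m:ℝ)+α+1) / ((Nat.factorial n : ℝ) * (Nat.factorial (m-n) : ℝ))) *
          ((-1:ℝ)^s * ((m-n).choose s : ℝ) * (Real.Gamma ((β+(n:ℝ)+1) + (s:ℝ)) / Real.Gamma ((α+(n:ℝ)+1) + (s:ℝ)))) := by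
    intro s hs
    have hs' : s ≤ m - n := Nat.lt_succ_iff.mp (Finset.mem_range.mp hs)
    have e1 : m - (n+s) = m - n - s := by omega
    have hd : (((n+s).descFactorial n : ℕ) : ℝ) = (Nat.factorial n : ℝ) * (((n+s).choose n : ℕ) : ℝ) := by
      exact_mod_cast Nat.descFactorial_eq_factorial_mul_choose (n+s) n
    have hc1 : (((n+s).choose n : ℕ) : ℝ) * (Nat.factorial n : ℝ) * (Nat.factorial s : ℝ) = (Nat.factorial (n+s) : ℝ) := by
      have := Nat.choose_mul_factorial_mul_factorial (Nat.le_add_right n s)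
      rw [Nat.add_sub_cancel_left] at this
      exact_mod_cast this
    have hc2 : (((m-n).choose s : ℕ) : ℝ) * (Nat.factorial s : ℝ) * (Nat.factorial (m-n-s) : ℝ) = (Nat.factorial (m-n) : ℝ) := by
      have := Nat.choose_mul_factorial_mul_factorial hs'
      exact_mod_cast this
    have h2 : (-1:ℝ)^n * (-1:ℝ)^n = 1 := by
      rw [← pow_add, ← two_mul, pow_mul]; norm_num
    have hGa := (Real.Gamma_pos_of_pos (show (0:ℝ) < (α+(n:ℝ)+1) + (s:ℝ) by positivity)).ne'
    have hGb := (Real.Gamma_pos_of_pos (show (0:ℝ) < (β+(n:ℝ)+1) + (s:ℝ) by positivity)).ne'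
    have hf1 : (Nat.factorial (m-n-s) : ℝ) ≠ 0 := Nat.cast_ne_zero.mpr (Nat.factorial_ne_zero _)
    have hf2 : (Nat.factorial s : ℝ) ≠ 0 := Nat.cast_ne_zero.mpr (Nat.factorial_ne_zero _)
    have hf3 : (Nat.factorial n : ℝ) ≠ 0 := Nat.cast_ne_zero.mpr (Nat.factorial_ne_zero _)
    have hf4 : (Nat.factorial (m-n) : ℝ) ≠ 0 := Nat.cast_ne_zero.mpr (Nat.factorial_ne_zero _)
    rw [e1, hd,
        show (((n+s:ℕ):ℝ)) + α + 1 = (α+(n:ℝ)+1) + (s:ℝ) by push_cast; ring,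
        show β + (((n+s:ℕ):ℝ)) + 1 = (β+(n:ℝ)+1) + (s:ℝ) by push_cast; ring,
        ← hc1, ← hc2, pow_add]
    have hch1 : (((n+s).choose n : ℕ) : ℝ) ≠ 0 :=
      Nat.cast_ne_zero.mpr (Nat.choose_pos (Nat.le_add_right n s)).ne'
    have hch2 : (((m-n).choose s : ℕ) : ℝ) ≠ 0 := Nat.cast_ne_zero.mpr (Nat.choose_pos hs').ne'
    field_simp
    linear_combination h2
  rw [Finset.sum_congr rfl hstep, ← Finset.mul_sum,
      key_sum (m-n) (β+(n:ℝ)+1) (α+(n:ℝ)+1) (by positivity) (by positivity),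
      show (α+(n:ℝ)+1) - (β+(n:ℝ)+1) = α - β by ring,
      show (α+(n:ℝ)+1) + ((m-n : ℕ) : ℝ) = (m:ℝ)+α+1 by rw [Nat.cast_sub hnm]; ring]
  field_simp
  ring

lemma DLag_eq_sum (α β : ℝ) (hβ : 0 < β) (m n : ℕ) :
    DLag α β m n =
      ((-1:ℝ)^m * Real.sqrt ((Nat.factorial m : ℝ) / Real.Gamma ((m : ℝ) + α + 1))) *
      ((-1:ℝ)^n * Real.sqrt ((Nat.factorial n : ℝ) / Real.Gamma ((n : ℝ) + β + 1))) *
      ∑ k ∈ Finset.range (m+1),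
        ((-1:ℝ)^k * (Real.Gamma ((m:ℝ)+α+1) / (Real.Gamma ((k:ℝ)+α+1) * (Nat.factorial (m-k) : ℝ) * (Nat.factorial k : ℝ))))
          * ∑ j ∈ Finset.range (n+1),
            ((-1:ℝ)^j * (Real.Gamma ((n:ℝ)+β+1) / (Real.Gamma ((j:ℝ)+β+1) * (Nat.factorial (n-j) : ℝ) * (Nat.factorial j : ℝ))))
              * Real.Gamma (β + (k:ℝ) + (j:ℝ) + 1) := by
  set cm : ℝ := (-1:ℝ)^m * Real.sqrt ((Nat.factorial m : ℝ) / Real.Gamma ((m : ℝ) + α + 1)) with hcm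
  set cn : ℝ := (-1:ℝ)^n * Real.sqrt ((Nat.factorial n : ℝ) / Real.Gamma ((n : ℝ) + β + 1)) with hcn
  set A : ℕ → ℝ := fun k =>
    (-1:ℝ)^k * (Real.Gamma ((m:ℝ)+α+1) / (Real.Gamma ((k:ℝ)+α+1) * (Nat.factorial (m-k) : ℝ) * (Nat.factorial k : ℝ))) with hA
  set B : ℕ → ℝ := fun j =>
    (-1:ℝ)^j * (Real.Gamma ((n:ℝ)+β+1) / (Real.Gamma ((j:ℝ)+β+1) * (Nat.factorial (n-j) : ℝ) * (Nat.factorial j : ℝ))) with hB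
  have hpoint : ∀ x ∈ Set.Ioi (0:ℝ),
      laguerreTilde α m x * laguerreTilde β n x * x ^ β * Real.exp (-x)
      = ∑ k ∈ Finset.range (m+1), ∑ j ∈ Finset.range (n+1),
          (cm * cn * (A k * B j)) * (Real.exp (-x) * x ^ (β + (k:ℝ) + (j:ℝ) + 1 - 1)) := by
    intro x hx
    have hx' : (0:ℝ) < x := hx
    simp only [laguerreTilde, laguerreL, Finset.mul_sum, Finset.sum_mul]
    rw [Finset.sum_comm]
    refine Finset.sum_congr rfl fun k _ => ?_
    refine Finset.sum_congr rfl fun j _ => ?_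
    have hxp : x ^ (β + (k:ℝ) + (j:ℝ) + 1 - 1) = x ^ β * x ^ (k:ℕ) * x ^ (j:ℕ) := by
      rw [show β + (k:ℝ) + (j:ℝ) + 1 - 1 = β + (k:ℝ) + (j:ℝ) by ring,
          Real.rpow_add hx', Real.rpow_add hx', Real.rpow_natCast, Real.rpow_natCast]
    rw [hxp, hA, hB]
    ring
  have hint : ∀ k ∈ Finset.range (m+1), ∀ j ∈ Finset.range (n+1),
      IntegrableOn (fun x => (cm * cn * (A k * B j)) * (Real.exp (-x) * x ^ (β + (k:ℝ) + (j:ℝ) + 1 - 1)))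
        (Set.Ioi (0:ℝ)) := by
    intro k _ j _
    exact (Real.GammaIntegral_convergent (by positivity : (0:ℝ) < β + (k:ℝ) + (j:ℝ) + 1)).const_mul _
  rw [DLag, setIntegral_congr_fun measurableSet_Ioi hpoint,
      integral_finset_sum _ (fun k hk => integrable_finset_sum _ (fun j hj => hint k hk j hj))]
  rw [Finset.mul_sum]
  refine Finset.sum_congr rfl fun k hk => ?_
  rw [integral_finset_sum _ (fun j hj => hint k hk j hj), Finset.mul_sum, Finset.mul_sum]
  refine Finset.sum_congr rfl fun j hj => ?_
  rw [MeasureTheory.integral_const_mul, ← Real.Gamma_eq_integral (by positivity : (0:ℝ) < β + (k:ℝ) + (j:ℝ) + 1)]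
  ring

/-- For `α, β > 0` and `0 ≤ n ≤ m`:
`𝒟_{m,n} = (−1)^{m−n} ((α−β)_{m−n}/(m−n)!) √(m! Γ(n+1+β)/(n! Γ(m+1+α)))`,
where `(z)_k` is the Pochhammer symbol. -/
theorem laguerre_laguerre_connection_coefficients
    (α β : ℝ) (hα : 0 < α) (hβ : 0 < β) (m n : ℕ) (hnm : n ≤ m) :
    DLag α β m n
      = (-1 : ℝ) ^ (m - n) * ((ascPochhammer ℝ (m - n)).eval (α - β) / Nat.factorial (m - n))
          * Real.sqrt ((Nat.factorial m : ℝ) * Real.Gamma ((n : ℝ) + 1 + β) /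
              ((Nat.factorial n : ℝ) * Real.Gamma ((m : ℝ) + 1 + α))) := by
  rw [DLag_eq_sum α β hβ m n,
      Finset.sum_congr rfl (fun k _ => by rw [my_inner_sum β hβ n k]),
      my_outer_sum α β hα hβ m n hnm,
      show (n:ℝ)+1+β = (n:ℝ)+β+1 by ring, show (m:ℝ)+1+α = (m:ℝ)+α+1 by ring]
  have hGm := Real.Gamma_pos_of_pos (show (0:ℝ) < (m:ℝ)+α+1 by positivity)
  have hGn := Real.Gamma_pos_of_pos (show (0:ℝ) < (n:ℝ)+β+1 by positivity)
  have hf1 : (0:ℝ) < (Nat.factorial m : ℝ) := Nat.cast_pos.mpr (Nat.factorial_pos _)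
  have hf2 : (0:ℝ) < (Nat.factorial n : ℝ) := Nat.cast_pos.mpr (Nat.factorial_pos _)
  have hf3 : (0:ℝ) < (Nat.factorial (m-n) : ℝ) := Nat.cast_pos.mpr (Nat.factorial_pos _)
  have hsign : (-1:ℝ)^m * (-1:ℝ)^n = (-1:ℝ)^(m-n) := by
    conv_lhs => rw [show m = (m-n)+n by omega]
    rw [pow_add, mul_assoc, ← pow_add, ← two_mul, pow_mul]
    norm_num
  have hK : Real.sqrt ((Nat.factorial m : ℝ) / Real.Gamma ((m:ℝ)+α+1)) *
        Real.sqrt ((Nat.factorial n : ℝ) / Real.Gamma ((n:ℝ)+β+1)) * Real.Gamma ((n:ℝ)+β+1)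
      = Real.sqrt ((Nat.factorial m : ℝ) * Real.Gamma ((n:ℝ)+β+1) /
          ((Nat.factorial n : ℝ) * Real.Gamma ((m:ℝ)+α+1))) * (Nat.factorial n : ℝ) := by
    have gen : ∀ a c : ℝ, 0 ≤ a → 0 ≤ c → Real.sqrt a * c = Real.sqrt (a * c^2) := by
      intro a c ha hc
      rw [Real.sqrt_mul ha, Real.sqrt_sq hc]
    rw [← Real.sqrt_mul (by positivity) ((Nat.factorial n : ℝ) / Real.Gamma ((n:ℝ)+β+1)),
        gen _ _ (by positivity) hGn.le, gen _ _ (by positivity) hf2.le]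
    congr 1
    field_simp
  have hK2 : Real.sqrt ((Nat.factorial m : ℝ) * Real.Gamma ((n:ℝ)+β+1) /
        ((Nat.factorial n : ℝ) * Real.Gamma ((m:ℝ)+α+1)))
      = Real.sqrt ((Nat.factorial m : ℝ) / Real.Gamma ((m:ℝ)+α+1)) *
          Real.sqrt ((Nat.factorial n : ℝ) / Real.Gamma ((n:ℝ)+β+1)) * Real.Gamma ((n:ℝ)+β+1)
          / (Nat.factorial n : ℝ) := by
    rw [eq_div_iff hf2.ne']
    exact hK.symm
  rw [← hsign, hK2]
  ring
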